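/- For any profile P of matroidal valuations, any agent i, and any two allocations A, A' ∈ cLD(P), the agent's utility under the SE subsidy is identical: |A_i| + p_i = |A'_i| + p'_i, where p and p' are the SE subsidy vectors for A and A' respectively. -/

import Mathlib

open Finset

/-- A matroidal valuation on the goods `Fin m`: a monotone submodular function
with `v ∅ = 0` whose marginal gains lie in `{0,1}`. -/
structure Matroidal (m : ℕ) where
  v : Finset (Fin m) → ℕ
  v_empty : v ∅ = 0
  mono : ∀ ⦃X Y : Finset (Fin m)⦄, X ⊆ Y → v X ≤ v Y
  submodular : ∀ X Y : Finset (Fin m), v (X ∪ Y) + v (X ∩ Y) ≤ v X + v Y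
  marginal : ∀ (X : Finset (Fin m)) (e : Fin m), v (insert e X) ≤ v X + 1

/-- An allocation: the bundles are pairwise disjoint. -/
def IsAllocation {n m : ℕ} (A : Fin n → Finset (Fin m)) : Prop :=
  ∀ i j : Fin n, i ≠ j → Disjoint (A i) (A j)

/-- An allocation is clean (for matroidal valuations) iff each bundle is independent. -/
def Clean {n m : ℕ} (P : Fin n → Matroidal m) (A : Fin n → Finset (Fin m)) : Prop :=
  ∀ i, (P i).v (A i) = (A i).card

/-- A utilitarian optimal allocation. -/
def UtilOpt {n m : ℕ} (P : Fin n → Matroidal m) (A : Fin n → Finset (Fin m)) : Prop :=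
  IsAllocation A ∧ ∀ B : Fin n → Finset (Fin m), IsAllocation B →
    ∑ i, (P i).v (B i) ≤ ∑ i, (P i).v (A i)

/-- The sum of the `k` smallest entries of `u`, as the minimum of all `k`-subset sums. -/
noncomputable def kSmallestSum {n : ℕ} (u : Fin n → ℕ) (k : ℕ) : ℕ :=
  sInf {s | ∃ S : Finset (Fin n), S.card = k ∧ s = ∑ i ∈ S, u i}

/-- `A` is Lorenz dominating: it is an allocation that Lorenz dominates every allocation. -/
def LorenzDominating {n m : ℕ} (P : Fin n → Matroidal m) (A : Fin n → Finset (Fin m)) : Prop :=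
  IsAllocation A ∧ ∀ B : Fin n → Finset (Fin m), IsAllocation B →
    ∀ k ≤ n, kSmallestSum (fun i => (P i).v (B i)) k ≤ kSmallestSum (fun i => (P i).v (A i)) k

/-- The set of clean Lorenz dominating allocations. -/
def cLD {n m : ℕ} (P : Fin n → Matroidal m) : Set (Fin n → Finset (Fin m)) :=
  {A | Clean P A ∧ LorenzDominating P A}

/-- `min_{B ∈ cLD(P)} |B_i|`. -/
noncomputable def minSize {n m : ℕ} (P : Fin n → Matroidal m) (i : Fin n) : ℕ :=
  sInf {c | ∃ A ∈ cLD P, c = (A i).card}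

/-- `max_{B ∈ cLD(P)} |B_i|`. -/
noncomputable def maxSize {n m : ℕ} (P : Fin n → Matroidal m) (i : Fin n) : ℕ :=
  sSup {c | ∃ A ∈ cLD P, c = (A i).card}

/-- The SE subsidy for agent `i` under allocation `A` and profile `P`. -/
noncomputable def sePay {n m : ℕ} (P : Fin n → Matroidal m) (A : Fin n → Finset (Fin m))
    (i : Fin n) : ℕ :=
  if (A i).card = minSize P i ∧ (A i).card < Finset.univ.sup (fun j => (A j).card) then 1 else 0

/-- Restriction of a matroidal valuation to a set `X`. -/
def Matroidal.restrict {m : ℕ} (w : Matroidal m) (X : Finset (Fin m)) : Matroidal m where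
  v Y := w.v (X ∩ Y)
  v_empty := by simp [w.v_empty]
  mono := fun {Y Z} h => w.mono (Finset.inter_subset_inter le_rfl h)
  submodular := fun Y Z => by
    have h := w.submodular (X ∩ Y) (X ∩ Z)
    have h1 : X ∩ (Y ∪ Z) = (X ∩ Y) ∪ (X ∩ Z) := Finset.inter_union_distrib_left X Y Z
    have h2 : X ∩ (Y ∩ Z) = (X ∩ Y) ∩ (X ∩ Z) := by
      ext a; simp [Finset.mem_inter]; tauto
    simpa [h1, h2] using h
  marginal := fun Y e => by
    by_cases he : e ∈ X
    · have h1 : X ∩ insert e Y = insert e (X ∩ Y) := by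
        ext a
        simp only [Finset.mem_inter, Finset.mem_insert]
        constructor
        · rintro ⟨ha, h⟩
          rcases h with rfl | hb
          · exact Or.inl rfl
          · exact Or.inr ⟨ha, hb⟩
        · rintro (rfl | ⟨ha, hb⟩)
          · exact ⟨he, Or.inl rfl⟩
          · exact ⟨ha, Or.inr hb⟩
      simpa [h1] using w.marginal (X ∩ Y) e
    · have h1 : X ∩ insert e Y = X ∩ Y := by
        ext a
        simp only [Finset.mem_inter, Finset.mem_insert]
        constructor
        · rintro ⟨ha, (rfl | hb)⟩
          · exact absurd ha he
          · exact ⟨ha, hb⟩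
        · rintro ⟨ha, hb⟩; exact ⟨ha, Or.inr hb⟩
      simp only [h1]
      exact Nat.le_succ _



namespace SEProof

variable {E : Type*} [DecidableEq E]

/-- A matroid rank function (integer, normalized, monotone, submodular, unit marginals). -/
structure Subm (r : Finset E → ℕ) : Prop where
  empty : r ∅ = 0
  mono : ∀ ⦃X Y : Finset E⦄, X ⊆ Y → r X ≤ r Y
  submod : ∀ X Y : Finset E, r (X ∪ Y) + r (X ∩ Y) ≤ r X + r Y
  marg : ∀ (X : Finset E) (e : E), r (insert e X) ≤ r X + 1

theorem Subm.union_le {r : Finset E → ℕ} (hr : Subm r) (X : Finset E) :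
    ∀ U : Finset E, r (X ∪ U) ≤ r X + U.card := by
  intro U
  induction U using Finset.induction_on with
  | empty => simpa using le_refl (r X)
  | @insert a U ha ih =>
    have h1 : X ∪ insert a U = insert a (X ∪ U) := by
      ext x; simp only [Finset.mem_insert, Finset.mem_union]; tauto
    rw [h1, Finset.card_insert_of_notMem ha]
    calc r (insert a (X ∪ U)) ≤ r (X ∪ U) + 1 := hr.marg _ _
    _ ≤ r X + U.card + 1 := by omega

theorem Subm.le_card {r : Finset E → ℕ} (hr : Subm r) (X : Finset E) : r X ≤ X.card := by
  have := hr.union_le ∅ X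
  simpa [hr.empty] using this

theorem Subm.subset_indep {r : Finset E → ℕ} (hr : Subm r) {S T : Finset E}
    (hS : r S = S.card) (hTS : T ⊆ S) : r T = T.card := by
  have h1 : S = T ∪ (S \ T) := by
    ext x; simp [Finset.mem_union, Finset.mem_sdiff]; tauto
  have h2 : r S ≤ r T + (S \ T).card := by
    calc r S = r (T ∪ (S \ T)) := by rw [← h1]
    _ ≤ r T + (S \ T).card := hr.union_le T (S \ T)
  have h3 : (S \ T).card = S.card - T.card := Finset.card_sdiff_of_subset hTS
  have h4 : T.card ≤ S.card := Finset.card_le_card hTS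
  have h5 : r T ≤ T.card := hr.le_card T
  omega

theorem Subm.bridge {r : Finset E → ℕ} (hr : Subm r) :
    ∀ X : Finset E, (∀ e ∈ X, r (X.erase e) < r X) → r X = X.card := by
  intro X
  induction X using Finset.strongInduction with
  | _ X ih =>
    intro hX
    rcases X.eq_empty_or_nonempty with rfl | ⟨e, he⟩
    · simpa using hr.empty
    · have h1 : r (X.erase e) < r X := hX e he
      have h2 : r X ≤ r (X.erase e) + 1 := by
        have := hr.marg (X.erase e) e
        rwa [Finset.insert_erase he] at this
      have key : ∀ f ∈ X.erase e, r ((X.erase e).erase f) < r (X.erase e) := by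
        intro f hf
        have hfe : f ≠ e := Finset.ne_of_mem_erase hf
        have hfX : f ∈ X := Finset.mem_of_mem_erase hf
        have hsub := hr.submod (X.erase e) (X.erase f)
        have hu : X.erase e ∪ X.erase f = X := by
          ext x; simp [Finset.mem_union, Finset.mem_erase]
          constructor
          · rintro (⟨_, h⟩ | ⟨_, h⟩) <;> exact h
          · intro hx
            by_cases hxe : x = e
            · exact Or.inr ⟨by simp [hxe, hfe.symm], hx⟩
            · exact Or.inl ⟨hxe, hx⟩
        have hi : X.erase e ∩ X.erase f = (X.erase e).erase f := by
          ext x; simp [Finset.mem_inter, Finset.mem_erase]; tauto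
        rw [hu, hi] at hsub
        have h3 : r (X.erase f) < r X := hX f hfX
        omega
      have h4 : r (X.erase e) = (X.erase e).card := ih (X.erase e) (Finset.erase_ssubset he) key
      have h5 : (X.erase e).card = X.card - 1 := Finset.card_erase_of_mem he
      have h6 : 1 ≤ X.card := Finset.card_pos.mpr ⟨e, he⟩
      have h7 : r X ≤ X.card := hr.le_card X
      omega

/-- Cleaning: every set has an independent subset of the same rank. -/
theorem Subm.exists_clean {r : Finset E → ℕ} (hr : Subm r) :
    ∀ X : Finset E, ∃ Y ⊆ X, r Y = Y.card ∧ r Y = r X := by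
  intro X
  induction X using Finset.strongInduction with
  | _ X ih =>
    by_cases hX : r X = X.card
    · exact ⟨X, Finset.Subset.refl X, hX, rfl⟩
    · have : ¬ (∀ e ∈ X, r (X.erase e) < r X) := fun h => hX (hr.bridge X h)
      push_neg at this
      obtain ⟨e, he, hge⟩ := this
      have hle : r (X.erase e) ≤ r X := hr.mono (Finset.erase_subset e X)
      have heq : r (X.erase e) = r X := le_antisymm hle hge
      obtain ⟨Y, hY1, hY2, hY3⟩ := ih (X.erase e) (Finset.erase_ssubset he)
      exact ⟨Y, hY1.trans (Finset.erase_subset e X), hY2, by omega⟩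


theorem Subm.loop {r : Finset E → ℕ} (hr : Subm r) {e : E} (he : r {e} = 0) (Z : Finset E) :
    r (insert e Z) = r Z := by
  refine le_antisymm ?_ (hr.mono (Finset.subset_insert e Z))
  have h := hr.submod Z {e}
  have h1 : Z ∪ {e} = insert e Z := by ext x; simp [Finset.mem_insert, Finset.mem_union, or_comm]
  rw [h1, he] at h
  omega

theorem Subm.single_le_one {r : Finset E → ℕ} (hr : Subm r) (e : E) : r {e} ≤ 1 := by
  have := hr.marg ∅ e
  simpa [hr.empty] using this

/-- Contraction of a rank function by a non-loop element. -/
theorem Subm.contract {r : Finset E → ℕ} (hr : Subm r) {e : E} (he : r {e} = 1) :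
    Subm (fun X => r (insert e X) - 1) := by
  have hge : ∀ X : Finset E, 1 ≤ r (insert e X) := by
    intro X
    have : ({e} : Finset E) ⊆ insert e X := by
      intro x hx; simp at hx; simp [hx]
    have := hr.mono this
    omega
  constructor
  · have h0 : insert e (∅ : Finset E) = {e} := rfl
    simp only [h0]
    omega
  · intro X Y hXY
    exact Nat.sub_le_sub_right (hr.mono (Finset.insert_subset_insert e hXY)) 1
  · intro X Y
    have h := hr.submod (insert e X) (insert e Y)
    have h1 : insert e X ∪ insert e Y = insert e (X ∪ Y) := by
      ext x; simp only [Finset.mem_insert, Finset.mem_union]; tauto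
    have h2 : insert e X ∩ insert e Y = insert e (X ∩ Y) := by
      ext x; simp [Finset.mem_insert, Finset.mem_inter]; tauto
    rw [h1, h2] at h
    have := hge X; have := hge Y; have := hge (X ∪ Y); have := hge (X ∩ Y)
    omega
  · intro X f
    have h := hr.marg (insert e X) f
    have h1 : insert f (insert e X) = insert e (insert f X) := Finset.insert_comm f e X
    rw [h1] at h
    have := hge X; have := hge (insert f X)
    omega

/-- The matroid intersection theorem (existence direction), by induction on the ground set. -/
theorem matroid_intersection [Fintype E] :
    ∀ (G : Finset E) (r1 r2 : Finset E → ℕ), Subm r1 → Subm r2 → ∀ (k : ℕ),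
    (∀ X ⊆ G, k ≤ r1 X + r2 (G \ X)) →
    ∃ I ⊆ G, r1 I = I.card ∧ r2 I = I.card ∧ k ≤ I.card := by
  intro G
  induction G using Finset.strongInduction with
  | _ G ih =>
    intro r1 r2 h1 h2 k hk
    rcases Nat.eq_zero_or_pos k with rfl | hkpos
    · exact ⟨∅, Finset.empty_subset G, by simp [h1.empty], by simp [h2.empty], Nat.zero_le _⟩
    rcases G.eq_empty_or_nonempty with rfl | ⟨e, he⟩
    · have := hk ∅ (Finset.Subset.refl _)
      simp [h1.empty, h2.empty] at this
      omega
    have hG' : G.erase e ⊂ G := Finset.erase_ssubset he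
    -- loop cases
    by_cases hl1 : r1 {e} = 0
    · have hk' : ∀ X ⊆ G.erase e, k ≤ r1 X + r2 (G.erase e \ X) := by
        intro X hX
        have hXG : insert e X ⊆ G := by
          intro x hx; rcases Finset.mem_insert.mp hx with rfl | hx
          · exact he
          · exact (Finset.erase_subset e G) (hX hx)
        have heX : e ∉ X := fun hc => (Finset.notMem_erase e G) (hX hc)
        have h3 := hk (insert e X) hXG
        rw [h1.loop hl1 X] at h3
        have h4 : G \ insert e X = G.erase e \ X := by
          ext x; simp [Finset.mem_sdiff, Finset.mem_erase, Finset.mem_insert]; tauto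
        rwa [h4] at h3
      obtain ⟨I, hIsub, a, b, c⟩ := ih (G.erase e) hG' r1 r2 h1 h2 k hk'
      exact ⟨I, hIsub.trans (Finset.erase_subset e G), a, b, c⟩
    by_cases hl2 : r2 {e} = 0
    · have hk' : ∀ X ⊆ G.erase e, k ≤ r1 X + r2 (G.erase e \ X) := by
        intro X hX
        have hXG : X ⊆ G := hX.trans (Finset.erase_subset e G)
        have h3 := hk X hXG
        have heX : e ∉ X := fun hc => (Finset.notMem_erase e G) (hX hc)
        have h4 : G \ X = insert e (G.erase e \ X) := by
          ext x; simp [Finset.mem_sdiff, Finset.mem_erase, Finset.mem_insert]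
          constructor
          · rintro ⟨hxG, hxX⟩
            by_cases hxe : x = e
            · exact Or.inl hxe
            · exact Or.inr ⟨⟨hxe, hxG⟩, hxX⟩
          · rintro (rfl | ⟨⟨_, hxG⟩, hxX⟩)
            · exact ⟨he, heX⟩
            · exact ⟨hxG, hxX⟩
        rw [h4, h2.loop hl2] at h3
        exact h3
      obtain ⟨I, hIsub, a, b, c⟩ := ih (G.erase e) hG' r1 r2 h1 h2 k hk'
      exact ⟨I, hIsub.trans (Finset.erase_subset e G), a, b, c⟩
    have he1 : r1 {e} = 1 := le_antisymm (h1.single_le_one e) (by omega)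
    have he2 : r2 {e} = 1 := le_antisymm (h2.single_le_one e) (by omega)
    -- deletion attempt
    by_cases hdel : ∀ X ⊆ G.erase e, k ≤ r1 X + r2 (G.erase e \ X)
    · obtain ⟨I, hIsub, a, b, c⟩ := ih (G.erase e) hG' r1 r2 h1 h2 k hdel
      exact ⟨I, hIsub.trans (Finset.erase_subset e G), a, b, c⟩
    push_neg at hdel
    obtain ⟨X1, hX1sub, hX1⟩ := hdel
    have heX1 : e ∉ X1 := fun hc => (Finset.notMem_erase e G) (hX1sub hc)
    -- contraction attempt
    set r1' : Finset E → ℕ := fun X => r1 (insert e X) - 1 with hr1'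
    set r2' : Finset E → ℕ := fun X => r2 (insert e X) - 1 with hr2'
    have h1' : Subm r1' := h1.contract he1
    have h2' : Subm r2' := h2.contract he2
    have hge1 : ∀ X : Finset E, 1 ≤ r1 (insert e X) := by
      intro X
      have : ({e} : Finset E) ⊆ insert e X := by intro x hx; simp at hx; simp [hx]
      have := h1.mono this; omega
    have hge2 : ∀ X : Finset E, 1 ≤ r2 (insert e X) := by
      intro X
      have : ({e} : Finset E) ⊆ insert e X := by intro x hx; simp at hx; simp [hx]
      have := h2.mono this; omega
    by_cases hcon : ∀ X ⊆ G.erase e, k - 1 ≤ r1' X + r2' (G.erase e \ X)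
    · obtain ⟨I, hIsub, a, b, c⟩ := ih (G.erase e) hG' r1' r2' h1' h2' (k-1) hcon
      have heI : e ∉ I := fun hc => (Finset.notMem_erase e G) (hIsub hc)
      refine ⟨insert e I, ?_, ?_, ?_, ?_⟩
      · intro x hx; rcases Finset.mem_insert.mp hx with rfl | hx
        · exact he
        · exact (Finset.erase_subset e G) (hIsub hx)
      · have := hge1 I
        simp only [hr1'] at a
        rw [Finset.card_insert_of_notMem heI]
        omega
      · have := hge2 I
        simp only [hr2'] at b
        rw [Finset.card_insert_of_notMem heI]
        omega
      · rw [Finset.card_insert_of_notMem heI]; omega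
    push_neg at hcon
    obtain ⟨Y, hYsub, hY⟩ := hcon
    have heY : e ∉ Y := fun hc => (Finset.notMem_erase e G) (hYsub hc)
    exfalso
    simp only [hr1', hr2'] at hY
    have hge1Y := hge1 Y
    have hge2Y := hge2 (G.erase e \ Y)
    -- hY : r1 (insert e Y) - 1 + (r2 (insert e (G.erase e \ Y)) - 1) < k - 1
    have hYval : r1 (insert e Y) + r2 (G \ Y) ≤ k := by
      have h4 : insert e (G.erase e \ Y) = G \ Y := by
        ext x; simp [Finset.mem_sdiff, Finset.mem_erase, Finset.mem_insert]
        constructor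
        · rintro (rfl | ⟨⟨_, hxG⟩, hxY⟩)
          · exact ⟨he, heY⟩
          · exact ⟨hxG, hxY⟩
        · rintro ⟨hxG, hxY⟩
          by_cases hxe : x = e
          · exact Or.inl hxe
          · exact Or.inr ⟨⟨hxe, hxG⟩, hxY⟩
      rw [h4] at hY hge2Y
      omega
    have hX1val : r1 X1 + r2 (G \ insert e X1) ≤ k - 1 := by
      have h4 : G.erase e \ X1 = G \ insert e X1 := by
        ext x; simp [Finset.mem_sdiff, Finset.mem_erase, Finset.mem_insert]; tauto
      rw [h4] at hX1
      omega
    -- submodular combination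
    have hs1 : r1 (insert e (X1 ∪ Y)) + r1 (X1 ∩ Y) ≤ r1 X1 + r1 (insert e Y) := by
      have h := h1.submod X1 (insert e Y)
      have hu : X1 ∪ insert e Y = insert e (X1 ∪ Y) := by
        ext x; simp only [Finset.mem_insert, Finset.mem_union]; tauto
      have hi : X1 ∩ insert e Y = X1 ∩ Y := by
        ext x; simp only [Finset.mem_inter, Finset.mem_insert]
        constructor
        · rintro ⟨hx1, rfl | hxY⟩
          · exact absurd hx1 heX1
          · exact ⟨hx1, hxY⟩
        · rintro ⟨hx1, hxY⟩; exact ⟨hx1, Or.inr hxY⟩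
      rw [hu, hi] at h
      exact h
    have hs2 : r2 (G \ (X1 ∩ Y)) + r2 (G \ insert e (X1 ∪ Y)) ≤
        r2 (G \ insert e X1) + r2 (G \ Y) := by
      have h := h2.submod (G \ insert e X1) (G \ Y)
      have hu : G \ insert e X1 ∪ G \ Y = G \ (insert e X1 ∩ Y) := by
        ext x; simp [Finset.mem_sdiff, Finset.mem_union, Finset.mem_inter]; tauto
      have hi : (G \ insert e X1) ∩ (G \ Y) = G \ (insert e X1 ∪ Y) := by
        ext x; simp [Finset.mem_sdiff, Finset.mem_union, Finset.mem_inter]; tauto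
      have h5 : insert e X1 ∩ Y = X1 ∩ Y := by
        ext x; simp only [Finset.mem_inter, Finset.mem_insert]
        constructor
        · rintro ⟨rfl | hx1, hxY⟩
          · exact absurd hxY heY
          · exact ⟨hx1, hxY⟩
        · rintro ⟨hx1, hxY⟩; exact ⟨Or.inr hx1, hxY⟩
      have h6 : insert e X1 ∪ Y = insert e (X1 ∪ Y) := by
        ext x; simp only [Finset.mem_insert, Finset.mem_union]; tauto
      rw [hu, hi, h5, h6] at h
      exact h
    have hk1 := hk (X1 ∩ Y) ((Finset.inter_subset_left).trans hX1sub |>.trans (Finset.erase_subset e G))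
    have hk2 : k ≤ r1 (insert e (X1 ∪ Y)) + r2 (G \ insert e (X1 ∪ Y)) := by
      refine hk _ ?_
      intro x hx
      rcases Finset.mem_insert.mp hx with rfl | hx
      · exact he
      · rcases Finset.mem_union.mp hx with hx | hx
        · exact (Finset.erase_subset e G) (hX1sub hx)
        · exact (Finset.erase_subset e G) (hYsub hx)
    omega

section Product

variable {n m : ℕ}

/-- The goods allocated to agent `l` in a set of (good, agent) pairs. -/
def slice (X : Finset (Fin m × Fin n)) (l : Fin n) : Finset (Fin m) :=
  (X.filter (fun p => p.2 = l)).image Prod.fst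

theorem mem_slice {X : Finset (Fin m × Fin n)} {l : Fin n} {g : Fin m} :
    g ∈ slice X l ↔ (g, l) ∈ X := by
  simp only [slice, Finset.mem_image, Finset.mem_filter]
  constructor
  · rintro ⟨⟨a, b⟩, ⟨hmem, hb⟩, rfl⟩
    simp only at hb
    subst hb
    exact hmem
  · intro h
    exact ⟨(g, l), ⟨h, rfl⟩, rfl⟩

theorem slice_union {X Y : Finset (Fin m × Fin n)} {l : Fin n} :
    slice (X ∪ Y) l = slice X l ∪ slice Y l := by
  ext g; simp [mem_slice, Finset.mem_union]

theorem slice_inter {X Y : Finset (Fin m × Fin n)} {l : Fin n} :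
    slice (X ∩ Y) l = slice X l ∩ slice Y l := by
  ext g; simp [mem_slice, Finset.mem_inter]

theorem slice_mono {X Y : Finset (Fin m × Fin n)} (h : X ⊆ Y) (l : Fin n) :
    slice X l ⊆ slice Y l := by
  intro g hg; rw [mem_slice] at hg ⊢; exact h hg

theorem slice_insert {X : Finset (Fin m × Fin n)} {p : Fin m × Fin n} {l : Fin n} :
    slice (insert p X) l = if p.2 = l then insert p.1 (slice X l) else slice X l := by
  obtain ⟨a, b⟩ := p
  by_cases hb : b = l
  · subst hb
    rw [if_pos (rfl : (a, b).2 = b)]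
    ext g
    rw [mem_slice, Finset.mem_insert, Finset.mem_insert, mem_slice]
    constructor
    · rintro (h | h)
      · left; exact congrArg Prod.fst h
      · right; exact h
    · rintro (rfl | h)
      · left; rfl
      · right; exact h
  · simp only [if_neg hb]
    ext g
    rw [mem_slice, Finset.mem_insert, mem_slice]
    constructor
    · rintro (h | h)
      · exact absurd (congrArg Prod.snd h).symm hb
      · exact h
    · intro h; exact Or.inr h

theorem slice_card {X : Finset (Fin m × Fin n)} {l : Fin n} :
    (slice X l).card = (X.filter (fun p => p.2 = l)).card := by
  apply Finset.card_image_of_injOn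
  intro p hp q hq hpq
  simp only [Finset.coe_filter, Set.mem_setOf_eq] at hp hq
  exact Prod.ext hpq (hp.2.trans hq.2.symm)

theorem card_eq_sum_slices (X : Finset (Fin m × Fin n)) :
    X.card = ∑ l, (slice X l).card := by
  have h := Finset.card_eq_sum_card_fiberwise
    (f := Prod.snd) (s := X) (t := Finset.univ) (fun x _ => Finset.mem_univ _)
  rw [h]
  exact Finset.sum_congr rfl fun l _ => (slice_card).symm

/-- The partition rank function: number of distinct goods. -/
theorem subm_partition : Subm (fun X : Finset (Fin m × Fin n) => (X.image Prod.fst).card) := by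
  constructor
  · simp
  · intro X Y h
    exact Finset.card_le_card (Finset.image_subset_image h)
  · intro X Y
    rw [Finset.image_union]
    have h1 : ((X ∩ Y).image Prod.fst).card ≤ (X.image Prod.fst ∩ Y.image Prod.fst).card := by
      apply Finset.card_le_card
      intro g hg
      simp only [Finset.mem_image, Finset.mem_inter] at hg ⊢
      obtain ⟨p, ⟨h1, h2⟩, rfl⟩ := hg
      exact ⟨⟨p, h1, rfl⟩, ⟨p, h2, rfl⟩⟩
    have h2 := Finset.card_union_add_card_inter (X.image Prod.fst) (Y.image Prod.fst)
    omega
  · intro X p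
    rw [Finset.image_insert]
    exact Finset.card_insert_le _ _

/-- The direct sum rank function. -/
theorem subm_dirsum (w : Fin n → Finset (Fin m) → ℕ) (hw : ∀ l, Subm (w l)) :
    Subm (fun X : Finset (Fin m × Fin n) => ∑ l, w l (slice X l)) := by
  constructor
  · have : ∀ l : Fin n, slice (∅ : Finset (Fin m × Fin n)) l = ∅ := by
      intro l; ext g; simp [mem_slice]
    simp only [this]
    simp [fun l => (hw l).empty]
  · intro X Y h
    exact Finset.sum_le_sum fun l _ => (hw l).mono (slice_mono h l)
  · intro X Y
    rw [← Finset.sum_add_distrib, ← Finset.sum_add_distrib]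
    refine Finset.sum_le_sum fun l _ => ?_
    rw [slice_union, slice_inter]
    exact (hw l).submod _ _
  · intro X p
    have h : ∀ l : Fin n, w l (slice (insert p X) l) ≤ w l (slice X l) + if l = p.2 then 1 else 0 := by
      intro l
      rw [slice_insert]
      by_cases hl : p.2 = l
      · simp only [hl, if_true, if_pos hl.symm]
        exact (hw l).marg _ _
      · rw [if_neg hl, if_neg (fun hc : l = p.2 => hl hc.symm)]
        omega
    calc ∑ l, w l (slice (insert p X) l)
        ≤ ∑ l, (w l (slice X l) + if l = p.2 then 1 else 0) := Finset.sum_le_sum fun l _ => h l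
      _ = (∑ l, w l (slice X l)) + 1 := by
          rw [Finset.sum_add_distrib, Finset.sum_ite_eq' Finset.univ p.2 (fun _ => 1)]
          simp

/-- Existence of an optimal clean allocation, from matroid intersection. -/
theorem exists_opt (w : Fin n → Finset (Fin m) → ℕ) (hw : ∀ l, Subm (w l)) (k : ℕ)
    (hk : ∀ Z : Finset (Fin m), k ≤ (Finset.univ \ Z).card + ∑ l, w l Z) :
    ∃ B : Fin n → Finset (Fin m), IsAllocation B ∧ (∀ l, w l (B l) = (B l).card) ∧
      k ≤ ∑ l, (B l).card := by
  have hr1 := (subm_partition (n := n) (m := m))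
  have hr2 := subm_dirsum w hw
  have hint := matroid_intersection (Finset.univ : Finset (Fin m × Fin n))
    (fun X => (X.image Prod.fst).card) (fun X => ∑ l, w l (slice X l)) hr1 hr2 k ?_
  · obtain ⟨I, _, hI1, hI2, hIcard⟩ := hint
    have hinj : Set.InjOn Prod.fst (I : Set (Fin m × Fin n)) :=
      Finset.injOn_of_card_image_eq hI1
    refine ⟨fun l => slice I l, ?_, ?_, ?_⟩
    · intro a b hab
      rw [Finset.disjoint_left]
      intro g hga hgb
      rw [mem_slice] at hga hgb
      have : (g, a) = (g, b) := hinj hga hgb rfl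
      exact hab (congrArg Prod.snd this)
    · -- each bundle is clean for w
      have hsum : ∑ l, w l (slice I l) = ∑ l, (slice I l).card := by
        rw [hI2, card_eq_sum_slices]
      intro l
      by_contra hne
      have hlt : w l (slice I l) < (slice I l).card :=
        lt_of_le_of_ne ((hw l).le_card _) hne
      have : ∑ l, w l (slice I l) < ∑ l, (slice I l).card := by
        apply Finset.sum_lt_sum (fun j _ => (hw j).le_card _) ⟨l, Finset.mem_univ l, hlt⟩
      omega
    · rw [← card_eq_sum_slices]
      exact hIcard
  · intro X _
    set Z : Finset (Fin m) := Finset.univ \ X.image Prod.fst with hZ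
    have h1 : (Finset.univ \ Z).card = (X.image Prod.fst).card := by
      rw [hZ, Finset.sdiff_sdiff_self_left, Finset.univ_inter]
    have h2 : ∀ l, w l Z ≤ w l (slice (Finset.univ \ X) l) := by
      intro l
      apply (hw l).mono
      intro g hg
      rw [mem_slice, Finset.mem_sdiff]
      rw [hZ, Finset.mem_sdiff] at hg
      exact ⟨Finset.mem_univ _, fun hc => hg.2 (Finset.mem_image_of_mem Prod.fst hc)⟩
    calc k ≤ (Finset.univ \ Z).card + ∑ l, w l Z := hk Z
      _ ≤ (X.image Prod.fst).card + ∑ l, w l (slice (Finset.univ \ X) l) := by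
          rw [h1]; exact Nat.add_le_add_left (Finset.sum_le_sum fun l _ => h2 l) _

end Product

section Profile

variable {n m : ℕ}

theorem subm_of_matroidal (w : Matroidal m) : Subm w.v :=
  ⟨w.v_empty, w.mono, w.submodular, w.marginal⟩

theorem trunc_subm {r : Finset (Fin m) → ℕ} (hr : Subm r) (c : ℕ) :
    Subm (fun X => min (r X) c) := by
  constructor
  · simp [hr.empty]
  · intro X Y h
    exact min_le_min (hr.mono h) (le_refl c)
  · intro X Y
    have h1 := hr.submod X Y
    have h2 := hr.mono (Finset.subset_union_left (s₁ := X) (s₂ := Y))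
    have h3 := hr.mono (Finset.subset_union_right (s₁ := X) (s₂ := Y))
    have h4 := hr.mono (Finset.inter_subset_left (s₁ := X) (s₂ := Y))
    have h5 := hr.mono (Finset.inter_subset_right (s₁ := X) (s₂ := Y))
    simp only [min_def]
    split_ifs <;> omega
  · intro X e
    have h1 := hr.marg X e
    simp only [min_def]
    split_ifs <;> omega

/-- The min side of the matroid-union min-max formula, used as definition of the
maximum total value obtainable by the agents in `S`. -/
noncomputable def gmin (P : Fin n → Matroidal m) (S : Finset (Fin n)) : ℕ :=
  sInf {t | ∃ Z : Finset (Fin m), t = (Finset.univ \ Z).card + ∑ l ∈ S, (P l).v Z}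

theorem gmin_set_nonempty (P : Fin n → Matroidal m) (S : Finset (Fin n)) :
    {t | ∃ Z : Finset (Fin m), t = (Finset.univ \ Z).card + ∑ l ∈ S, (P l).v Z}.Nonempty :=
  ⟨_, ⟨∅, rfl⟩⟩

theorem gmin_le (P : Fin n → Matroidal m) (S : Finset (Fin n)) (Z : Finset (Fin m)) :
    gmin P S ≤ (Finset.univ \ Z).card + ∑ l ∈ S, (P l).v Z :=
  Nat.sInf_le ⟨Z, rfl⟩

theorem gmin_exists (P : Fin n → Matroidal m) (S : Finset (Fin n)) :
    ∃ Z : Finset (Fin m), gmin P S = (Finset.univ \ Z).card + ∑ l ∈ S, (P l).v Z :=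
  Nat.sInf_mem (gmin_set_nonempty P S)

theorem alloc_le_val (P : Fin n → Matroidal m) {B : Fin n → Finset (Fin m)}
    (hB : IsAllocation B) (S : Finset (Fin n)) (Z : Finset (Fin m)) :
    ∑ l ∈ S, (P l).v (B l) ≤ (Finset.univ \ Z).card + ∑ l ∈ S, (P l).v Z := by
  have h1 : ∀ l, (P l).v (B l) ≤ (P l).v Z + ((B l) \ Z).card := by
    intro l
    have hsub := subm_of_matroidal (P l)
    have hdecomp : B l = (B l ∩ Z) ∪ (B l \ Z) := by
      ext x; simp only [Finset.mem_union, Finset.mem_inter, Finset.mem_sdiff]; tauto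
    calc (P l).v (B l) = (P l).v ((B l ∩ Z) ∪ (B l \ Z)) := by rw [← hdecomp]
      _ ≤ (P l).v (B l ∩ Z) + ((B l) \ Z).card := hsub.union_le _ _
      _ ≤ (P l).v Z + ((B l) \ Z).card := by
          exact Nat.add_le_add_right (hsub.mono (Finset.inter_subset_right)) _
  have h2 : ∑ l ∈ S, ((B l) \ Z).card ≤ (Finset.univ \ Z).card := by
    have hdisj : ∀ a ∈ S, ∀ b ∈ S, a ≠ b → Disjoint ((B a) \ Z) ((B b) \ Z) := by
      intro a _ b _ hab
      exact Finset.disjoint_of_subset_left (Finset.sdiff_subset)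
        (Finset.disjoint_of_subset_right (Finset.sdiff_subset) (hB a b hab))
    rw [← Finset.card_biUnion hdisj]
    apply Finset.card_le_card
    intro x hx
    simp only [Finset.mem_biUnion, Finset.mem_sdiff] at hx
    obtain ⟨l, _, _, hxZ⟩ := hx
    simp [Finset.mem_sdiff, hxZ]
  calc ∑ l ∈ S, (P l).v (B l) ≤ ∑ l ∈ S, ((P l).v Z + ((B l) \ Z).card) :=
        Finset.sum_le_sum fun l _ => h1 l
    _ = ∑ l ∈ S, (P l).v Z + ∑ l ∈ S, ((B l) \ Z).card := Finset.sum_add_distrib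
    _ ≤ ∑ l ∈ S, (P l).v Z + (Finset.univ \ Z).card := Nat.add_le_add_left h2 _
    _ = (Finset.univ \ Z).card + ∑ l ∈ S, (P l).v Z := Nat.add_comm _ _

theorem alloc_le_gmin (P : Fin n → Matroidal m) {B : Fin n → Finset (Fin m)}
    (hB : IsAllocation B) (S : Finset (Fin n)) :
    ∑ l ∈ S, (P l).v (B l) ≤ gmin P S := by
  apply le_csInf (gmin_set_nonempty P S)
  rintro t ⟨Z, rfl⟩
  exact alloc_le_val P hB S Z

theorem gmin_submod (P : Fin n → Matroidal m) (S T : Finset (Fin n)) :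
    gmin P (S ∪ T) + gmin P (S ∩ T) ≤ gmin P S + gmin P T := by
  obtain ⟨Z, hZ⟩ := gmin_exists P S
  obtain ⟨W, hW⟩ := gmin_exists P T
  have h1 : gmin P (S ∪ T) ≤ (Finset.univ \ (Z ∩ W)).card + ∑ l ∈ S ∪ T, (P l).v (Z ∩ W) :=
    gmin_le P _ _
  have h2 : gmin P (S ∩ T) ≤ (Finset.univ \ (Z ∪ W)).card + ∑ l ∈ S ∩ T, (P l).v (Z ∪ W) :=
    gmin_le P _ _
  have hcard : (Finset.univ \ (Z ∩ W)).card + (Finset.univ \ (Z ∪ W)).card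
      = (Finset.univ \ Z).card + (Finset.univ \ W).card := by
    have e1 : Finset.univ \ (Z ∩ W) = (Finset.univ \ Z) ∪ (Finset.univ \ W) := by
      ext x; simp only [Finset.mem_sdiff, Finset.mem_union, Finset.mem_inter, Finset.mem_univ,
        true_and]; tauto
    have e2 : Finset.univ \ (Z ∪ W) = (Finset.univ \ Z) ∩ (Finset.univ \ W) := by
      ext x; simp only [Finset.mem_sdiff, Finset.mem_union, Finset.mem_inter, Finset.mem_univ,
        true_and]; tauto
    rw [e1, e2]
    exact Finset.card_union_add_card_inter _ _
  have hsum : ∑ l ∈ S ∪ T, (P l).v (Z ∩ W) + ∑ l ∈ S ∩ T, (P l).v (Z ∪ W)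
      ≤ ∑ l ∈ S, (P l).v Z + ∑ l ∈ T, (P l).v W := by
    have d1 : ∑ l ∈ S ∪ T, (P l).v (Z ∩ W)
        = ∑ l ∈ S, (P l).v (Z ∩ W) + ∑ l ∈ T \ S, (P l).v (Z ∩ W) := by
      rw [← Finset.sum_union (Finset.disjoint_sdiff)]
      congr 1
      ext x; simp only [Finset.mem_union, Finset.mem_sdiff]; tauto
    have d2 : ∑ l ∈ S, (P l).v (Z ∩ W)
        = ∑ l ∈ S ∩ T, (P l).v (Z ∩ W) + ∑ l ∈ S \ T, (P l).v (Z ∩ W) :=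
      (Finset.sum_inter_add_sum_sdiff S T _).symm
    have d3 : ∑ l ∈ S, (P l).v Z
        = ∑ l ∈ S ∩ T, (P l).v Z + ∑ l ∈ S \ T, (P l).v Z :=
      (Finset.sum_inter_add_sum_sdiff S T _).symm
    have d4 : ∑ l ∈ T, (P l).v W
        = ∑ l ∈ T ∩ S, (P l).v W + ∑ l ∈ T \ S, (P l).v W :=
      (Finset.sum_inter_add_sum_sdiff T S _).symm
    have t1 : ∑ l ∈ S ∩ T, (P l).v (Z ∩ W) + ∑ l ∈ S ∩ T, (P l).v (Z ∪ W)
        ≤ ∑ l ∈ S ∩ T, (P l).v Z + ∑ l ∈ T ∩ S, (P l).v W := by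
      rw [← Finset.sum_add_distrib, Finset.inter_comm T S, ← Finset.sum_add_distrib]
      refine Finset.sum_le_sum fun l _ => ?_
      have := (P l).submodular Z W
      omega
    have t2 : ∑ l ∈ S \ T, (P l).v (Z ∩ W) ≤ ∑ l ∈ S \ T, (P l).v Z :=
      Finset.sum_le_sum fun l _ => (P l).mono (Finset.inter_subset_left)
    have t3 : ∑ l ∈ T \ S, (P l).v (Z ∩ W) ≤ ∑ l ∈ T \ S, (P l).v W :=
      Finset.sum_le_sum fun l _ => (P l).mono (Finset.inter_subset_right)
    omega
  omega

/-- Realizability: any integer vector dominated by `gmin` with full total is the size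
vector of some clean allocation. -/
theorem realize (P : Fin n → Matroidal m) (z : Fin n → ℕ)
    (hz : ∀ S : Finset (Fin n), ∑ l ∈ S, z l ≤ gmin P S)
    (hN : gmin P Finset.univ ≤ ∑ l, z l) :
    ∃ B : Fin n → Finset (Fin m), IsAllocation B ∧ Clean P B ∧ ∀ l, (B l).card = z l := by
  set w : Fin n → Finset (Fin m) → ℕ := fun l X => min ((P l).v X) (z l) with hw_def
  have hw : ∀ l, Subm (w l) := fun l => trunc_subm (subm_of_matroidal (P l)) (z l)
  have hp : ∀ Z : Finset (Fin m), ∑ l, z l ≤ (Finset.univ \ Z).card + ∑ l, w l Z := by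
    intro Z
    set S := Finset.univ.filter (fun l => (P l).v Z < z l) with hS
    have hsplit : ∑ l, w l Z = ∑ l ∈ S, (P l).v Z + ∑ l ∈ Finset.univ \ S, z l := by
      have e1 : ∑ l, w l Z = ∑ l ∈ S, w l Z + ∑ l ∈ Finset.univ \ S, w l Z := by
        rw [← Finset.sum_union (Finset.disjoint_sdiff)]
        congr 1
        ext x
        simp only [Finset.mem_union, Finset.mem_sdiff, Finset.mem_univ, true_and, iff_true]
        tauto
      rw [e1]
      congr 1
      · refine Finset.sum_congr rfl fun l hl => ?_
        rw [hS, Finset.mem_filter] at hl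
        simp only [hw_def]
        omega
      · refine Finset.sum_congr rfl fun l hl => ?_
        rw [Finset.mem_sdiff, hS, Finset.mem_filter] at hl
        simp only [hw_def]
        have : ¬ ((P l).v Z < z l) := fun hc => hl.2 ⟨Finset.mem_univ l, hc⟩
        omega
    have hzS : ∑ l ∈ S, z l ≤ (Finset.univ \ Z).card + ∑ l ∈ S, (P l).v Z :=
      (hz S).trans (gmin_le P S Z)
    have hzsplit : ∑ l, z l = ∑ l ∈ S, z l + ∑ l ∈ Finset.univ \ S, z l := by
      rw [← Finset.sum_union (Finset.disjoint_sdiff)]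
      congr 1
      ext x
      simp only [Finset.mem_union, Finset.mem_sdiff, Finset.mem_univ, true_and, iff_true]
      tauto
    omega
  obtain ⟨B, hBalloc, hBclean, hBcard⟩ := exists_opt w hw (∑ l, z l) hp
  have hle : ∀ l, (B l).card ≤ z l := by
    intro l
    have := hBclean l
    simp only [hw_def] at this
    omega
  have heq : ∀ l, (B l).card = z l := by
    by_contra hc
    push_neg at hc
    obtain ⟨l0, hl0⟩ := hc
    have : ∑ l, (B l).card < ∑ l, z l :=
      Finset.sum_lt_sum (fun l _ => hle l) ⟨l0, Finset.mem_univ l0, lt_of_le_of_ne (hle l0) hl0⟩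
    omega
  refine ⟨B, hBalloc, ?_, heq⟩
  intro l
  have h1 := hBclean l
  simp only [hw_def] at h1
  have h2 := (subm_of_matroidal (P l)).le_card (B l)
  have h3 := heq l
  omega

end Profile

section KSS

variable {n : ℕ}

theorem kss_le {u : Fin n → ℕ} {k : ℕ} {S : Finset (Fin n)} (hS : S.card = k) :
    kSmallestSum u k ≤ ∑ i ∈ S, u i :=
  Nat.sInf_le ⟨S, hS, rfl⟩

theorem kss_set_nonempty (u : Fin n → ℕ) {k : ℕ} (hk : k ≤ n) :
    {s | ∃ S : Finset (Fin n), S.card = k ∧ s = ∑ i ∈ S, u i}.Nonempty := by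
  obtain ⟨S, -, hS⟩ := Finset.exists_subset_card_eq (s := (Finset.univ : Finset (Fin n))) (n := k)
    (by simp only [Finset.card_univ, Fintype.card_fin]; exact hk)
  exact ⟨_, S, hS, rfl⟩

theorem kss_ge {u : Fin n → ℕ} {k : ℕ} (hk : k ≤ n) {c : ℕ}
    (h : ∀ S : Finset (Fin n), S.card = k → c ≤ ∑ i ∈ S, u i) : c ≤ kSmallestSum u k := by
  apply le_csInf (kss_set_nonempty u hk)
  rintro t ⟨S, hS, rfl⟩
  exact h S hS

theorem kss_exists {u : Fin n → ℕ} {k : ℕ} (hk : k ≤ n) :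
    ∃ S : Finset (Fin n), S.card = k ∧ kSmallestSum u k = ∑ i ∈ S, u i :=
  Nat.sInf_mem (kss_set_nonempty u hk)

theorem kss_univ (u : Fin n → ℕ) : kSmallestSum u n = ∑ i, u i := by
  have hset : {s | ∃ S : Finset (Fin n), S.card = n ∧ s = ∑ i ∈ S, u i} = {∑ i, u i} := by
    ext s
    simp only [Set.mem_setOf_eq, Set.mem_singleton_iff]
    constructor
    · rintro ⟨S, hS, rfl⟩
      have : S = Finset.univ := Finset.eq_univ_of_card S (by simp [hS])
      rw [this]
    · rintro rfl
      exact ⟨Finset.univ, by simp, rfl⟩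
  rw [kSmallestSum, hset, csInf_singleton]

theorem kss_pred_add_sup (u : Fin n → ℕ) (hn : 0 < n) :
    kSmallestSum u (n - 1) + Finset.univ.sup u = ∑ i, u i := by
  have hne : (Finset.univ : Finset (Fin n)).Nonempty := ⟨⟨0, hn⟩, Finset.mem_univ _⟩
  obtain ⟨l0, -, hl0⟩ := Finset.exists_mem_eq_sup Finset.univ hne u
  have hcard : (Finset.univ.erase l0).card = n - 1 := by
    rw [Finset.card_erase_of_mem (Finset.mem_univ l0)]
    simp
  apply le_antisymm
  · have h1 : kSmallestSum u (n - 1) ≤ ∑ i ∈ Finset.univ.erase l0, u i := kss_le hcard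
    have h2 : ∑ i ∈ Finset.univ.erase l0, u i + u l0 = ∑ i, u i :=
      Finset.sum_erase_add _ _ (Finset.mem_univ l0)
    omega
  · obtain ⟨S, hScard, hSeq⟩ := kss_exists (u := u) (k := n - 1) (by omega)
    have hc1 : (Finset.univ \ S).card = 1 := by
      rw [Finset.card_sdiff_of_subset (Finset.subset_univ S), Finset.card_univ, Fintype.card_fin, hScard]
      omega
    obtain ⟨l1, hl1⟩ := Finset.card_eq_one.mp hc1
    have hl1S : l1 ∉ S := by
      have : l1 ∈ Finset.univ \ S := by rw [hl1]; exact Finset.mem_singleton_self l1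
      exact (Finset.mem_sdiff.mp this).2
    have hsplit : ∑ i ∈ S, u i + u l1 = ∑ i, u i := by
      have : insert l1 S = Finset.univ := by
        apply Finset.eq_univ_of_card
        rw [Finset.card_insert_of_notMem hl1S, hScard]
        simp
        omega
      rw [← this, Finset.sum_insert hl1S]
      omega
    have hsup : u l1 ≤ Finset.univ.sup u := Finset.le_sup (Finset.mem_univ l1)
    omega

theorem sup_eq_of_kss_eq {u u' : Fin n → ℕ} (hn : 0 < n)
    (h : ∀ k ≤ n, kSmallestSum u k = kSmallestSum u' k) :
    Finset.univ.sup u = Finset.univ.sup u' := by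
  have e1 := kss_pred_add_sup u hn
  have e2 := kss_pred_add_sup u' hn
  have e3 : kSmallestSum u (n - 1) = kSmallestSum u' (n - 1) := h (n - 1) (by omega)
  have e4 : kSmallestSum u n = kSmallestSum u' n := h n (le_refl n)
  rw [kss_univ, kss_univ] at e4
  omega

/-- The Robin Hood lemma: a unit transfer from a rich agent to a poor агент strictly
improves some prefix sum. -/
theorem robin_hood {u u' : Fin n → ℕ} {i j : Fin n} (hij : i ≠ j)
    (h'i : u' i = u i + 1) (h'j : u' j + 1 = u j) (hbig : u i + 2 ≤ u j)
    (hoff : ∀ l, l ≠ i → l ≠ j → u' l = u l) :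
    ∃ k ≤ n, kSmallestSum u k < kSmallestSum u' k := by
  set a := u i with ha
  set T := Finset.univ.filter (fun l => u l ≤ a) with hT
  have hiT : i ∈ T := by rw [hT, Finset.mem_filter]; exact ⟨Finset.mem_univ i, le_refl a⟩
  have hjT : j ∉ T := by
    rw [hT, Finset.mem_filter]
    rintro ⟨-, hc⟩
    omega
  set T' := T.erase i with hT'
  set k := T.card with hk_def
  have hk : k ≤ n := by
    rw [hk_def]
    calc T.card ≤ (Finset.univ : Finset (Fin n)).card := Finset.card_le_card (Finset.subset_univ T)
      _ = n := by simp
  refine ⟨k, hk, ?_⟩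
  have hT'mem : ∀ l ∈ T', u' l = u l ∧ u l ≤ a := by
    intro l hl
    have hli : l ≠ i := Finset.ne_of_mem_erase hl
    have hlT : l ∈ T := Finset.mem_of_mem_erase hl
    have hlj : l ≠ j := fun hc => hjT (hc ▸ hlT)
    rw [hT, Finset.mem_filter] at hlT
    exact ⟨hoff l hli hlj, hlT.2⟩
  have hout : ∀ l, l ∉ T' → a + 1 ≤ u' l := by
    intro l hl
    by_cases hli : l = i
    · rw [hli]; omega
    · by_cases hlj : l = j
      · rw [hlj]; omega
      · have hlT : l ∉ T := by
          intro hc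
          exact hl (Finset.mem_erase.mpr ⟨hli, hc⟩)
        rw [hT, Finset.mem_filter] at hlT
        have : ¬ (u l ≤ a) := fun hc => hlT ⟨Finset.mem_univ l, hc⟩
        rw [hoff l hli hlj]
        omega
  have hsumT : ∑ l ∈ T', u l + a = ∑ l ∈ T, u l := Finset.sum_erase_add T u hiT
  have hgoal : ∑ l ∈ T, u l + 1 ≤ kSmallestSum u' k := by
    apply kss_ge hk
    intro S hS
    have hd1 : ∑ l ∈ S ∩ T', u' l + ∑ l ∈ S \ T', u' l = ∑ l ∈ S, u' l :=
      Finset.sum_inter_add_sum_sdiff S T' u'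
    have hd2 : ∑ l ∈ S ∩ T', u' l = ∑ l ∈ S ∩ T', u l := by
      refine Finset.sum_congr rfl fun l hl => ?_
      exact (hT'mem l (Finset.mem_inter.mp hl).2).1
    have hd3 : (S \ T').card * (a + 1) ≤ ∑ l ∈ S \ T', u' l := by
      have := Finset.card_nsmul_le_sum (S \ T') u' (a + 1)
        (fun x hx => hout x (Finset.mem_sdiff.mp hx).2)
      simpa [smul_eq_mul] using this
    have hd4 : ∑ l ∈ T' \ S, u l ≤ (T' \ S).card * a := by
      have := Finset.sum_le_card_nsmul (T' \ S) u a
        (fun x hx => (hT'mem x (Finset.mem_sdiff.mp hx).1).2)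
      simpa [smul_eq_mul] using this
    have hd5 : ∑ l ∈ T' ∩ S, u l + ∑ l ∈ T' \ S, u l = ∑ l ∈ T', u l :=
      Finset.sum_inter_add_sum_sdiff T' S u
    have hd6 : T' ∩ S = S ∩ T' := Finset.inter_comm T' S
    rw [hd6] at hd5
    -- card bookkeeping
    have hc1 : (S ∩ T').card + (S \ T').card = k := by
      rw [Finset.card_inter_add_card_sdiff S T', hS]
    have hc2 : (S ∩ T').card + (T' \ S).card = k - 1 := by
      rw [Finset.inter_comm S T', Finset.card_inter_add_card_sdiff T' S]
      rw [hT', Finset.card_erase_of_mem hiT, ← hk_def]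
    have hc3 : 1 ≤ k := by
      rw [hk_def]
      exact Finset.card_pos.mpr ⟨i, hiT⟩
    have hc4 : (S \ T').card = (T' \ S).card + 1 := by omega
    have hmul : (T' \ S).card * a ≤ (T' \ S).card * (a + 1) :=
      Nat.mul_le_mul_left _ (by omega)
    have hd7 : (S \ T').card * (a + 1) = (T' \ S).card * (a + 1) + (a + 1) := by
      rw [hc4, Nat.add_mul, Nat.one_mul]
    omega
  have hle : kSmallestSum u k ≤ ∑ l ∈ T, u l := kss_le rfl
  omega

end KSS

section Key

variable {n m : ℕ}

theorem sum_shift (x z : Fin n → ℕ) (i j : Fin n) (hij : j ≠ i)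
    (hzi : z i = x i + 1) (hzj : z j + 1 = x j)
    (hzoff : ∀ l, l ≠ i → l ≠ j → z l = x l) (S : Finset (Fin n)) :
    ∑ l ∈ S, z l + (if j ∈ S then 1 else 0)
      = ∑ l ∈ S, x l + (if i ∈ S then 1 else 0) := by
  by_cases hiS : i ∈ S
  · by_cases hjS : j ∈ S
    · rw [if_pos hiS, if_pos hjS]
      have hjei : j ∈ S.erase i := Finset.mem_erase.mpr ⟨hij, hjS⟩
      have e1 : ∑ l ∈ (S.erase i).erase j, z l + z j = ∑ l ∈ S.erase i, z l :=
        Finset.sum_erase_add _ _ hjei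
      have e2 : ∑ l ∈ S.erase i, z l + z i = ∑ l ∈ S, z l :=
        Finset.sum_erase_add _ _ hiS
      have e3 : ∑ l ∈ (S.erase i).erase j, x l + x j = ∑ l ∈ S.erase i, x l :=
        Finset.sum_erase_add _ _ hjei
      have e4 : ∑ l ∈ S.erase i, x l + x i = ∑ l ∈ S, x l :=
        Finset.sum_erase_add _ _ hiS
      have e5 : ∑ l ∈ (S.erase i).erase j, z l = ∑ l ∈ (S.erase i).erase j, x l := by
        refine Finset.sum_congr rfl fun l hl => ?_
        exact hzoff l (Finset.ne_of_mem_erase (Finset.mem_of_mem_erase hl))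
          (Finset.ne_of_mem_erase hl)
      omega
    · rw [if_pos hiS, if_neg hjS]
      have e2 : ∑ l ∈ S.erase i, z l + z i = ∑ l ∈ S, z l :=
        Finset.sum_erase_add _ _ hiS
      have e4 : ∑ l ∈ S.erase i, x l + x i = ∑ l ∈ S, x l :=
        Finset.sum_erase_add _ _ hiS
      have e5 : ∑ l ∈ S.erase i, z l = ∑ l ∈ S.erase i, x l := by
        refine Finset.sum_congr rfl fun l hl => ?_
        exact hzoff l (Finset.ne_of_mem_erase hl) (fun hc => hjS (hc ▸ Finset.mem_of_mem_erase hl))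
      omega
  · by_cases hjS : j ∈ S
    · rw [if_neg hiS, if_pos hjS]
      have e2 : ∑ l ∈ S.erase j, z l + z j = ∑ l ∈ S, z l :=
        Finset.sum_erase_add _ _ hjS
      have e4 : ∑ l ∈ S.erase j, x l + x j = ∑ l ∈ S, x l :=
        Finset.sum_erase_add _ _ hjS
      have e5 : ∑ l ∈ S.erase j, z l = ∑ l ∈ S.erase j, x l := by
        refine Finset.sum_congr rfl fun l hl => ?_
        exact hzoff l (fun hc => hiS (hc ▸ Finset.mem_of_mem_erase hl)) (Finset.ne_of_mem_erase hl)
      omega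
    · rw [if_neg hiS, if_neg hjS]
      have e5 : ∑ l ∈ S, z l = ∑ l ∈ S, x l := by
        refine Finset.sum_congr rfl fun l hl => ?_
        exact hzoff l (fun hc => hiS (hc ▸ hl)) (fun hc => hjS (hc ▸ hl))
      omega

variable (P : Fin n → Matroidal m)

theorem x_le_gmin {A : Fin n → Finset (Fin m)} (hA : A ∈ cLD P) (S : Finset (Fin n)) :
    ∑ l ∈ S, (A l).card ≤ gmin P S := by
  have h := alloc_le_gmin P hA.2.1 S
  have he : ∑ l ∈ S, (P l).v (A l) = ∑ l ∈ S, (A l).card :=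
    Finset.sum_congr rfl fun l _ => hA.1 l
  omega

theorem tight_N {A : Fin n → Finset (Fin m)} (hA : A ∈ cLD P) :
    ∑ l, (A l).card = gmin P Finset.univ := by
  apply le_antisymm (x_le_gmin P hA Finset.univ)
  obtain ⟨B, hBalloc, hBclean, hBcard⟩ := exists_opt (fun l => (P l).v)
    (fun l => subm_of_matroidal (P l)) (gmin P Finset.univ) (fun Z => gmin_le P Finset.univ Z)
  have hLD := hA.2.2 B hBalloc n (le_refl n)
  rw [kss_univ, kss_univ] at hLD
  have e1 : ∑ l, (P l).v (B l) = ∑ l, (B l).card := Finset.sum_congr rfl fun l _ => hBclean l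
  have e2 : ∑ l, (P l).v (A l) = ∑ l, (A l).card := Finset.sum_congr rfl fun l _ => hA.1 l
  omega

theorem pred_inf' (F : Finset (Finset (Fin n))) (hne : F.Nonempty) (p : Finset (Fin n) → Prop)
    (hall : ∀ S ∈ F, p S) (hcl : ∀ S S', p S → p S' → p (S ∩ S')) : p (F.inf' hne id) := by
  revert hall
  induction hne using Finset.Nonempty.cons_induction with
  | singleton a =>
    intro hall
    simpa using hall a (Finset.mem_singleton_self a)
  | cons a F ha hF ih =>
    intro hall
    rw [Finset.inf'_cons (H := hF)]
    have h1 : p a := hall a (Finset.mem_cons_self a F)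
    have h2 : p (F.inf' hF id) := ih fun S hS => hall S (Finset.mem_cons_of_mem hS)
    exact hcl _ _ h1 h2

theorem pred_sup' (F : Finset (Finset (Fin n))) (hne : F.Nonempty) (p : Finset (Fin n) → Prop)
    (hall : ∀ S ∈ F, p S) (hcl : ∀ S S', p S → p S' → p (S ∪ S')) : p (F.sup' hne id) := by
  revert hall
  induction hne using Finset.Nonempty.cons_induction with
  | singleton a =>
    intro hall
    simpa using hall a (Finset.mem_singleton_self a)
  | cons a F ha hF ih =>
    intro hall
    rw [Finset.sup'_cons (H := hF)]
    have h1 : p a := hall a (Finset.mem_cons_self a F)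
    have h2 : p (F.sup' hF id) := ih fun S hS => hall S (Finset.mem_cons_of_mem hS)
    exact hcl _ _ h1 h2

/-- The key exchange lemma: the bundle sizes of an agent in two clean Lorenz dominating
allocations differ by at most one. -/
theorem key_lemma {A A' : Fin n → Finset (Fin m)} (hA : A ∈ cLD P) (hA' : A' ∈ cLD P)
    (i : Fin n) : (A' i).card ≤ (A i).card + 1 := by
  by_contra hcon
  push_neg at hcon
  set x : Fin n → ℕ := fun l => (A l).card with hx
  set y : Fin n → ℕ := fun l => (A' l).card with hy
  have hbig : x i + 2 ≤ y i := hcon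
  have hxg : ∀ S : Finset (Fin n), ∑ l ∈ S, x l ≤ gmin P S := fun S => x_le_gmin P hA S
  have hyg : ∀ S : Finset (Fin n), ∑ l ∈ S, y l ≤ gmin P S := fun S => x_le_gmin P hA' S
  have hxN : ∑ l, x l = gmin P Finset.univ := tight_N P hA
  have hyN : ∑ l, y l = gmin P Finset.univ := tight_N P hA'
  clear hcon
  -- the minimal x-tight set containing i
  set F : Finset (Finset (Fin n)) := Finset.univ.powerset.filter
    (fun S => i ∈ S ∧ ∑ l ∈ S, x l = gmin P S) with hF
  have hFuniv : Finset.univ ∈ F := by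
    rw [hF, Finset.mem_filter]
    exact ⟨Finset.mem_powerset_self _, Finset.mem_univ i, tight_N P hA⟩
  have hFne : F.Nonempty := ⟨_, hFuniv⟩
  set T := F.inf' hFne id with hT
  have hTprop : i ∈ T ∧ ∑ l ∈ T, x l = gmin P T := by
    rw [hT]
    apply pred_inf' F hFne (fun S => i ∈ S ∧ ∑ l ∈ S, x l = gmin P S)
    · intro S hS
      rw [hF, Finset.mem_filter] at hS
      exact hS.2
    · rintro S S' ⟨hi1, ht1⟩ ⟨hi2, ht2⟩
      refine ⟨Finset.mem_inter.mpr ⟨hi1, hi2⟩, ?_⟩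
      have hsm := gmin_submod P S S'
      have h1 : ∑ l ∈ S ∪ S', x l ≤ gmin P (S ∪ S') := hxg (S ∪ S')
      have h2 : ∑ l ∈ S ∩ S', x l ≤ gmin P (S ∩ S') := hxg (S ∩ S')
      have h3 : ∑ l ∈ S ∪ S', x l + ∑ l ∈ S ∩ S', x l = ∑ l ∈ S, x l + ∑ l ∈ S', x l :=
        Finset.sum_union_inter
      omega
  have hTmin : ∀ S : Finset (Fin n), i ∈ S → ∑ l ∈ S, x l = gmin P S → T ⊆ S := by
    intro S hiS htS
    have hSF : S ∈ F := by
      rw [hF, Finset.mem_filter]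
      exact ⟨Finset.mem_powerset.mpr (Finset.subset_univ S), hiS, htS⟩
    exact Finset.inf'_le id hSF
  -- the maximal y-tight set avoiding i
  set F' : Finset (Finset (Fin n)) := Finset.univ.powerset.filter
    (fun S => i ∉ S ∧ ∑ l ∈ S, y l = gmin P S) with hF'
  have hgmin_empty : gmin P (∅ : Finset (Fin n)) = 0 := by
    have h1 := gmin_le P ∅ Finset.univ
    simpa using h1
  have hF'empty : (∅ : Finset (Fin n)) ∈ F' := by
    rw [hF', Finset.mem_filter]
    refine ⟨Finset.mem_powerset.mpr (Finset.empty_subset _), ?_, by simpa using hgmin_empty.symm⟩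
    simp
  have hF'ne : F'.Nonempty := ⟨_, hF'empty⟩
  set U := F'.sup' hF'ne id with hU
  have hUprop : i ∉ U ∧ ∑ l ∈ U, y l = gmin P U := by
    rw [hU]
    apply pred_sup' F' hF'ne (fun S => i ∉ S ∧ ∑ l ∈ S, y l = gmin P S)
    · intro S hS
      rw [hF', Finset.mem_filter] at hS
      exact hS.2
    · rintro S S' ⟨hi1, ht1⟩ ⟨hi2, ht2⟩
      refine ⟨fun hc => by rcases Finset.mem_union.mp hc with h | h; exacts [hi1 h, hi2 h], ?_⟩
      have hsm := gmin_submod P S S'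
      have h1 : ∑ l ∈ S ∪ S', y l ≤ gmin P (S ∪ S') := hyg (S ∪ S')
      have h2 : ∑ l ∈ S ∩ S', y l ≤ gmin P (S ∩ S') := hyg (S ∩ S')
      have h3 : ∑ l ∈ S ∪ S', y l + ∑ l ∈ S ∩ S', y l = ∑ l ∈ S, y l + ∑ l ∈ S', y l :=
        Finset.sum_union_inter
      omega
  have hUmax : ∀ S : Finset (Fin n), i ∉ S → ∑ l ∈ S, y l = gmin P S → S ⊆ U := by
    intro S hiS htS
    have hSF : S ∈ F' := by
      rw [hF', Finset.mem_filter]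
      exact ⟨Finset.mem_powerset.mpr (Finset.subset_univ S), hiS, htS⟩
    exact Finset.le_sup' id hSF
  obtain ⟨hiT, htT⟩ := hTprop
  obtain ⟨hiU, htU⟩ := hUprop
  clear hFuniv hF'empty
  clear_value T U
  clear hT hU hF hF'
  -- counting: some j in T \ U has x j > y j
  have hiTU : i ∈ T \ U := Finset.mem_sdiff.mpr ⟨hiT, hiU⟩
  have hcount : ∑ l ∈ T \ U, y l ≤ ∑ l ∈ T \ U, x l := by
    have hsm := gmin_submod P T U
    have h1 : ∑ l ∈ T ∪ U, y l ≤ gmin P (T ∪ U) := hyg (T ∪ U)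
    have h2 : ∑ l ∈ T ∩ U, x l ≤ gmin P (T ∩ U) := hxg (T ∩ U)
    have d1 : ∑ l ∈ T ∪ U, y l = ∑ l ∈ U, y l + ∑ l ∈ T \ U, y l := by
      rw [← Finset.sum_union (Finset.sdiff_disjoint.symm)]
      congr 1
      ext a; simp only [Finset.mem_union, Finset.mem_sdiff]; tauto
    have d2 : ∑ l ∈ T ∩ U, x l + ∑ l ∈ T \ U, x l = ∑ l ∈ T, x l :=
      Finset.sum_inter_add_sum_sdiff T U x
    omega
  have hjex : ∃ j ∈ T \ U, j ≠ i ∧ y j < x j := by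
    by_contra hc
    push_neg at hc
    have hterm : ∀ l ∈ (T \ U).erase i, x l ≤ y l := by
      intro l hl
      have hli : l ≠ i := Finset.ne_of_mem_erase hl
      have hlTU : l ∈ T \ U := Finset.mem_of_mem_erase hl
      exact hc l hlTU hli
    have e1 : ∑ l ∈ (T \ U).erase i, x l + x i = ∑ l ∈ T \ U, x l :=
      Finset.sum_erase_add _ _ hiTU
    have e2 : ∑ l ∈ (T \ U).erase i, y l + y i = ∑ l ∈ T \ U, y l :=
      Finset.sum_erase_add _ _ hiTU
    have e3 : ∑ l ∈ (T \ U).erase i, x l ≤ ∑ l ∈ (T \ U).erase i, y l :=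
      Finset.sum_le_sum hterm
    omega
  obtain ⟨j, hjTU, hji, hxyj⟩ := hjex
  obtain ⟨hjT, hjU⟩ := Finset.mem_sdiff.mp hjTU
  have hxj1 : 1 ≤ x j := by omega
  -- x-side exchange vector
  obtain ⟨z, hzi, hzj, hzoff⟩ :
      ∃ z : Fin n → ℕ, z i = x i + 1 ∧ z j + 1 = x j ∧ ∀ l, l ≠ i → l ≠ j → z l = x l := by
    refine ⟨fun l => if l = i then x i + 1 else if l = j then x j - 1 else x l, by simp, ?_, ?_⟩
    · show (if j = i then x i + 1 else if j = j then x j - 1 else x j) + 1 = x j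
      rw [if_neg hji, if_pos rfl]
      omega
    · intro l h1 h2
      simp [h1, h2]
  have hzsum : ∀ S : Finset (Fin n),
      ∑ l ∈ S, z l + (if j ∈ S then 1 else 0) = ∑ l ∈ S, x l + (if i ∈ S then 1 else 0) :=
    sum_shift x z i j hji hzi hzj hzoff
  have hzle : ∀ S : Finset (Fin n), ∑ l ∈ S, z l ≤ gmin P S := by
    intro S
    have hS := hxg S
    have hsum := hzsum S
    by_cases hiS : i ∈ S
    · by_cases hjS : j ∈ S
      · rw [if_pos hiS, if_pos hjS] at hsum
        omega
      · -- S contains i but not j : S is not tight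
        have hnt : ∑ l ∈ S, x l < gmin P S := by
          rcases lt_or_eq_of_le hS with h | h
          · exact h
          · exact absurd (hTmin S hiS h hjT) hjS
        rw [if_pos hiS, if_neg hjS] at hsum
        omega
    · rw [if_neg hiS] at hsum
      omega
  obtain ⟨C, hCalloc, hCclean, hCcard⟩ := realize P z hzle (by
    have hsum := hzsum Finset.univ
    rw [if_pos (Finset.mem_univ j), if_pos (Finset.mem_univ i)] at hsum
    omega)
  -- Robin Hood on the x side gives x j ≤ x i + 1
  have hxle : x j ≤ x i + 1 := by
    by_contra hc
    push_neg at hc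
    have hrh := robin_hood (u := x) (u' := z) (i := i) (j := j)
      (fun hc' => hji hc'.symm) hzi hzj (by omega) hzoff
    obtain ⟨k, hk, hlt⟩ := hrh
    have hLD := hA.2.2 C hCalloc k hk
    have e1 : (fun l => (P l).v (C l)) = z := funext fun l => by rw [hCclean l, hCcard l]
    have e2 : (fun l => (P l).v (A l)) = x := funext fun l => hA.1 l
    rw [e1, e2] at hLD
    omega
  -- y-side exchange vector
  have hyi1 : 1 ≤ y i := by omega
  obtain ⟨z', hz'j, hz'i, hz'off⟩ :
      ∃ z' : Fin n → ℕ, z' j = y j + 1 ∧ z' i + 1 = y i ∧ ∀ l, l ≠ j → l ≠ i → z' l = y l := by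
    refine ⟨fun l => if l = j then y j + 1 else if l = i then y i - 1 else y l, by simp, ?_, ?_⟩
    · show (if i = j then y j + 1 else if i = i then y i - 1 else y i) + 1 = y i
      rw [if_neg (fun hc : i = j => hji hc.symm), if_pos rfl]
      omega
    · intro l h1 h2
      simp [h1, h2]
  have hz'sum : ∀ S : Finset (Fin n),
      ∑ l ∈ S, z' l + (if i ∈ S then 1 else 0) = ∑ l ∈ S, y l + (if j ∈ S then 1 else 0) :=
    sum_shift y z' j i hji.symm hz'j hz'i hz'off
  have hz'le : ∀ S : Finset (Fin n), ∑ l ∈ S, z' l ≤ gmin P S := by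
    intro S
    have hS := hyg S
    have hsum := hz'sum S
    by_cases hjS : j ∈ S
    · by_cases hiS : i ∈ S
      · rw [if_pos hiS, if_pos hjS] at hsum
        omega
      · -- S contains j but not i : S is not y-tight
        have hnt : ∑ l ∈ S, y l < gmin P S := by
          rcases lt_or_eq_of_le hS with h | h
          · exact h
          · exact absurd (hUmax S hiS h hjS) hjU
        rw [if_neg hiS, if_pos hjS] at hsum
        omega
    · rw [if_neg hjS] at hsum
      by_cases hiS : i ∈ S
      · rw [if_pos hiS] at hsum
        omega
      · rw [if_neg hiS] at hsum
        omega
  obtain ⟨C', hC'alloc, hC'clean, hC'card⟩ := realize P z' hz'le (by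
    have hsum := hz'sum Finset.univ
    rw [if_pos (Finset.mem_univ j), if_pos (Finset.mem_univ i)] at hsum
    omega)
  -- Robin Hood on the y side gives y i ≤ y j + 1
  have hyle : y i ≤ y j + 1 := by
    by_contra hc
    push_neg at hc
    have hrh := robin_hood (u := y) (u' := z') (i := j) (j := i)
      hji hz'j hz'i (by omega) hz'off
    obtain ⟨k, hk, hlt⟩ := hrh
    have hLD := hA'.2.2 C' hC'alloc k hk
    have e1 : (fun l => (P l).v (C' l)) = z' := funext fun l => by rw [hC'clean l, hC'card l]
    have e2 : (fun l => (P l).v (A' l)) = y := funext fun l => hA'.1 l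
    rw [e1, e2] at hLD
    omega
  omega

end Key

theorem sup_card_eq {n m : ℕ} (P : Fin n → Matroidal m) {A A' : Fin n → Finset (Fin m)}
    (hA : A ∈ cLD P) (hA' : A' ∈ cLD P) (hn : 0 < n) :
    Finset.univ.sup (fun l => (A l).card) = Finset.univ.sup (fun l => (A' l).card) := by
  have eA : (fun l => (P l).v (A l)) = (fun l => (A l).card) := funext fun l => hA.1 l
  have eA' : (fun l => (P l).v (A' l)) = (fun l => (A' l).card) := funext fun l => hA'.1 l
  apply sup_eq_of_kss_eq hn
  intro k hk
  have h1 := hA.2.2 A' hA'.2.1 k hk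
  have h2 := hA'.2.2 A hA.2.1 k hk
  rw [eA, eA'] at h1 h2
  exact le_antisymm h2 h1

theorem main_asym {n m : ℕ} (P : Fin n → Matroidal m) {A A' : Fin n → Finset (Fin m)}
    (hA : A ∈ cLD P) (hA' : A' ∈ cLD P)
    (i : Fin n) (hc : (A' i).card = (A i).card + 1) :
    (A i).card + sePay P A i = (A' i).card + sePay P A' i := by
  have hn : 0 < n := i.pos
  have h1 : minSize P i ≤ (A i).card := Nat.sInf_le ⟨A, hA, rfl⟩
  obtain ⟨B, hB, hBeq⟩ : ∃ B ∈ cLD P, minSize P i = (B i).card :=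
    Nat.sInf_mem (⟨_, A, hA, rfl⟩ : {c | ∃ B ∈ cLD P, c = (B i).card}.Nonempty)
  have h2 : (A' i).card ≤ (B i).card + 1 := key_lemma P hB hA' i
  have hmin : minSize P i = (A i).card := by omega
  have hsup := sup_card_eq P hA hA' hn
  have hlt : (A i).card < Finset.univ.sup (fun j => (A j).card) := by
    have h3 : (A' i).card ≤ Finset.univ.sup (fun j => (A' j).card) :=
      Finset.le_sup (f := fun j => (A' j).card) (Finset.mem_univ i)
    omega
  have hpayA : sePay P A i = 1 := by
    rw [sePay, if_pos ⟨hmin.symm, hlt⟩]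
  have hpayA' : sePay P A' i = 0 := by
    rw [sePay, if_neg]
    rintro ⟨hc1, -⟩
    omega
  omega

end SEProof

/-- Proposition 3.8: the utility of each agent in the SE mechanism does not depend on
the choice of the clean Lorenz dominating allocation. -/
theorem se_utility_independent {n m : ℕ} (P : Fin n → Matroidal m) (i : Fin n)
    (A A' : Fin n → Finset (Fin m)) (hA : A ∈ cLD P) (hA' : A' ∈ cLD P) :
    (A i).card + sePay P A i = (A' i).card + sePay P A' i := by
  have hn : 0 < n := i.pos
  have hkl1 : (A' i).card ≤ (A i).card + 1 := SEProof.key_lemma P hA hA' i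
  have hkl2 : (A i).card ≤ (A' i).card + 1 := SEProof.key_lemma P hA' hA i
  rcases Nat.lt_trichotomy (A i).card (A' i).card with hlt | heq | hgt
  · exact SEProof.main_asym P hA hA' i (by omega)
  · have hsup := SEProof.sup_card_eq P hA hA' hn
    have hpay : sePay P A i = sePay P A' i := by
      rw [sePay, sePay, heq, hsup]
    omega
  · exact (SEProof.main_asym P hA' hA i (by omega)).symm
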